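/- Let p be a prime and l ≥ 0. For every k with 0 ≤ k ≤ p^l − 1, the Eulerian number A(p^l − 1, k) is congruent to 1 modulo p. -/
import Mathlib

/-- The Eulerian numbers, defined by the recurrence
`A(n+1,k) = (k+1)·A(n,k) + (n-k+2)·A(n,k-1)` with `A(0,0) = 1`. -/
def eulerian : ℕ → ℕ → ℕ
  | 0, 0 => 1
  | 0, _ + 1 => 0
  | n + 1, 0 => eulerian n 0
  | n + 1, k + 1 => (k + 2) * eulerian n (k + 1) + (n - k + 1) * eulerian n k

/-- Integer closed form candidate for the Eulerian numbers. -/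
def eulerianS (n k : ℕ) : ℤ :=
  ∑ j ∈ Finset.range (k + 1), (-1) ^ j * ((n + 2).choose j : ℤ) * ((k : ℤ) + 1 - j) ^ (n + 1)

lemma eulerian_choose_helper (m j : ℕ) :
    ((j : ℤ) + 1) * (m.choose (j + 1) : ℤ) = ((m : ℤ) - j) * (m.choose j : ℤ) := by
  rcases le_or_gt j m with h | h
  · have h1 := Nat.choose_succ_right_eq m j
    have h2 : ((m.choose (j+1) * (j+1) : ℕ) : ℤ) = ((m.choose j * (m - j) : ℕ) : ℤ) := by
      exact_mod_cast congrArg (Nat.cast (R := ℤ)) h1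
    rw [Nat.cast_mul, Nat.cast_mul, Nat.cast_sub h] at h2
    push_cast at h2 ⊢
    linarith
  · rw [Nat.choose_eq_zero_of_lt h, Nat.choose_eq_zero_of_lt (by omega)]
    push_cast
    ring

lemma eulerianS_rec (n k : ℕ) :
    eulerianS (n + 1) (k + 1)
      = ((k : ℤ) + 2) * eulerianS n (k + 1) + ((n : ℤ) + 1 - k) * eulerianS n k := by
  have key : ∀ j : ℕ,
      (-1 : ℤ) ^ (j + 1) * ((n + 1 + 2).choose (j + 1) : ℤ) * (((k + 1 : ℕ) : ℤ) + 1 - ((j + 1 : ℕ) : ℤ)) ^ (n + 1 + 1)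
      = ((k : ℤ) + 2) *
          ((-1 : ℤ) ^ (j + 1) * ((n + 2).choose (j + 1) : ℤ) * (((k + 1 : ℕ) : ℤ) + 1 - ((j + 1 : ℕ) : ℤ)) ^ (n + 1))
        + ((n : ℤ) + 1 - (k : ℤ)) *
          ((-1 : ℤ) ^ j * ((n + 2).choose j : ℤ) * ((k : ℤ) + 1 - (j : ℤ)) ^ (n + 1)) := by
    intro j
    have h0 : (n + 1 + 2).choose (j + 1) = (n + 2).choose j + (n + 2).choose (j + 1) :=
      Nat.choose_succ_succ (n + 2) j
    have h1 : ((n + 1 + 2).choose (j + 1) : ℤ)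
        = ((n + 2).choose j : ℤ) + ((n + 2).choose (j + 1) : ℤ) := by
      exact_mod_cast congrArg (Nat.cast (R := ℤ)) h0
    have h2 := eulerian_choose_helper (n + 2) j
    push_cast at h2 ⊢
    linear_combination ((-1 : ℤ) ^ j * ((k : ℤ) + 1 - j) ^ (n + 1)) * h2
      + ((-1 : ℤ) ^ j * ((k : ℤ) + 1 - j) ^ (n + 1) * (-((k : ℤ) + 1 - j))) * h1
  unfold eulerianS
  rw [Finset.sum_range_succ'
        (fun j => (-1 : ℤ) ^ j * ((n + 1 + 2).choose j : ℤ) * (((k + 1 : ℕ) : ℤ) + 1 - (j : ℤ)) ^ (n + 1 + 1)) (k + 1),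
      Finset.sum_range_succ'
        (fun j => (-1 : ℤ) ^ j * ((n + 2).choose j : ℤ) * (((k + 1 : ℕ) : ℤ) + 1 - (j : ℤ)) ^ (n + 1)) (k + 1)]
  have hsum := Finset.sum_congr rfl (fun j (_ : j ∈ Finset.range (k + 1)) => key j)
  rw [hsum, Finset.sum_add_distrib, ← Finset.mul_sum, ← Finset.mul_sum]
  simp only [Nat.choose_zero_right, pow_zero, Nat.cast_zero, Nat.cast_one, one_mul]
  push_cast
  ring

lemma eulerian_zero_right : ∀ n, eulerian n 0 = 1
  | 0 => rfl
  | n + 1 => by rw [show eulerian (n+1) 0 = eulerian n 0 from rfl, eulerian_zero_right n]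

lemma eulerianS_zero_right (n : ℕ) : eulerianS n 0 = 1 := by
  simp [eulerianS]

lemma eulerianS_zero_left (k : ℕ) (hk : 1 ≤ k) : eulerianS 0 k = 0 := by
  unfold eulerianS
  rcases eq_or_lt_of_le hk with h | h
  · subst h
    simp [Finset.sum_range_succ]
  · have hsub : Finset.range 3 ⊆ Finset.range (k + 1) := Finset.range_subset_range.2 (by omega)
    rw [← Finset.sum_subset hsub]
    · simp [Finset.sum_range_succ]
      ring
    · intro x hx hx3
      have hx3' : 3 ≤ x := by
        simpa using Nat.not_lt.mp (fun h' => hx3 (Finset.mem_range.mpr h'))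
      have : (0 + 2).choose x = 0 := Nat.choose_eq_zero_of_lt (by omega)
      simp [this]

lemma eulerian_eq_zero_of_lt : ∀ n k, n < k → eulerian n k = 0
  | 0, k + 1, _ => rfl
  | n + 1, k + 1, h => by
    rw [show eulerian (n+1) (k+1) = (k + 2) * eulerian n (k + 1) + (n - k + 1) * eulerian n k from rfl,
      eulerian_eq_zero_of_lt n (k+1) (by omega), eulerian_eq_zero_of_lt n k (by omega)]
    ring

lemma eulerian_eq_S : ∀ n k, (eulerian n k : ℤ) = eulerianS n k := by
  intro n
  induction n with
  | zero =>
    intro k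
    cases k with
    | zero => simp [eulerian, eulerianS]
    | succ k =>
      rw [show eulerian 0 (k+1) = 0 from rfl, eulerianS_zero_left (k+1) (by omega)]
      simp
  | succ n ih =>
    intro k
    cases k with
    | zero =>
      rw [eulerian_zero_right, eulerianS_zero_right]
      simp
    | succ k =>
      rw [show eulerian (n+1) (k+1) = (k + 2) * eulerian n (k + 1) + (n - k + 1) * eulerian n k from rfl]
      push_cast
      rw [ih, ih, eulerianS_rec]
      rcases le_or_gt k n with h | h
      · have : ((n - k : ℕ) : ℤ) = (n : ℤ) - k := by
          rw [Nat.cast_sub h]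
        rw [this]
        ring
      · have h0 : eulerianS n k = 0 := by
          rw [← ih k, eulerian_eq_zero_of_lt n k h]
          simp
        rw [h0]
        ring

/-- For a prime `p`, `l ≥ 0`, and `0 ≤ k ≤ p^l − 1`, the Eulerian number
`A(p^l − 1, k)` is congruent to `1` modulo `p`. -/
theorem eulerian_prime_pow_sub_one_modEq_one (p l k : ℕ) (hp : p.Prime)
    (hk : k ≤ p ^ l - 1) :
    eulerian (p ^ l - 1) k ≡ 1 [MOD p] := by
  rcases Nat.eq_zero_or_pos l with rfl | hl
  · simp only [pow_zero] at hk ⊢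
    have : k = 0 := by omega
    subst this
    rfl
  · haveI : Fact p.Prime := ⟨hp⟩
    have plpos : 1 ≤ p ^ l := Nat.one_le_pow _ _ hp.pos
    rw [← ZMod.natCast_eq_natCast_iff]
    have hcast : ((eulerian (p ^ l - 1) k : ℕ) : ZMod p)
        = ((eulerianS (p ^ l - 1) k : ℤ) : ZMod p) := by
      rw [← eulerian_eq_S]
      push_cast
      rfl
    rw [hcast]
    unfold eulerianS
    have hn1 : p ^ l - 1 + 1 = p ^ l := by omega
    have hn2 : p ^ l - 1 + 2 = p ^ l + 1 := by omega
    rw [hn1, hn2]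
    push_cast
    have hpow : ∀ j : ℕ,
        ((-1 : ZMod p) ^ j * (((p ^ l + 1).choose j : ℕ) : ZMod p) * ((k : ZMod p) + 1 - j) ^ (p ^ l))
        = (-1 : ZMod p) ^ j * (((p ^ l + 1).choose j : ℕ) : ZMod p) * ((k : ZMod p) + 1 - j) := by
      intro j
      rw [ZMod.pow_card_pow]
    rw [Finset.sum_congr rfl (fun j _ => hpow j)]
    have hpl : ((p ^ l : ℕ) : ZMod p) = 0 := by
      rw [ZMod.natCast_eq_zero_iff]
      exact dvd_pow_self p (by omega)
    have hchoose1 : (((p ^ l + 1).choose 1 : ℕ) : ZMod p) = 1 := by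
      rw [Nat.choose_one_right]
      push_cast [hpl]
      simp
    rcases Nat.eq_zero_or_pos k with rfl | hkpos
    · simp
    · have hsub : Finset.range 2 ⊆ Finset.range (k + 1) := Finset.range_subset_range.2 (by omega)
      rw [← Finset.sum_subset hsub]
      · rw [Finset.sum_range_succ, Finset.sum_range_succ, Finset.sum_range_zero, hchoose1]
        simp
      · intro j hj hj2
        have hj2' : 2 ≤ j := by
          simpa using Nat.not_lt.mp (fun h' => hj2 (Finset.mem_range.mpr h'))
        have hjk : j ≤ k := by
          have := Finset.mem_range.mp hj; omega
        have hdvd : p ∣ (p ^ l + 1).choose j := by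
          obtain ⟨i, rfl⟩ : ∃ i, j = i + 1 := ⟨j - 1, by omega⟩
          have hP : (p ^ l + 1).choose (i + 1) = (p ^ l).choose i + (p ^ l).choose (i + 1) :=
            Nat.choose_succ_succ (p ^ l) i
          rw [hP]
          exact dvd_add
            (hp.dvd_choose_pow (by omega) (by omega))
            (hp.dvd_choose_pow (by omega) (by omega))
        have : (((p ^ l + 1).choose j : ℕ) : ZMod p) = 0 := by
          rw [ZMod.natCast_eq_zero_iff]; exact hdvd
        rw [this]
        ring
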